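/- Let T be an infinite, locally finite, spherically symmetric rooted tree: every vertex at distance n − 1 from the root o has exactly d_n ≥ 1 children, and the interaction strengths depend only on the level, so θ_v = θ_n = tanh(β J_n) for |v| = n, with 0 < J_min ≤ J_n ≤ J_max. Then lim_N P^(N,+)(η(o) = +1) > 1/2 (i.e., there are multiple Gibbs states for the ferromagnetic Ising model on T at inverse temperature β) if and only if Σ_{n ≥ 1} Π_{i=1}^n (d_i θ_i)^{-2} < ∞. -/

import Mathlib

open scoped ENNReal Classical

noncomputable section

/-- Vertices of the canonical rooted tree: finite sequences of naturals; the root is `[]`. -/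
abbrev Vtx := List ℕ

/-- Vertices of the tree determined by the child-count function `c`. -/
inductive IsVtx (c : Vtx → ℕ) : Vtx → Prop
  | root : IsVtx c []
  | child {v : Vtx} {i : ℕ} : IsVtx c v → i < c v → IsVtx c (v ++ [i])

/-- A flow: conservation at every non-root, non-leaf vertex (edges are identified with their
lower endpoints). -/
def IsFlow (c : Vtx → ℕ) (μ : Vtx → ℝ≥0∞) : Prop :=
  ∀ v : Vtx, IsVtx c v → v ≠ [] → c v ≠ 0 →
    μ v = ∑ i ∈ Finset.range (c v), μ (v ++ [i])

/-- Total flow out of the root. -/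
def flowMass (c : Vtx → ℕ) (μ : Vtx → ℝ≥0∞) : ℝ≥0∞ :=
  ∑ i ∈ Finset.range (c []), μ [i]

/-- An infinite ray from the root. -/
def IsRay (c : Vtx → ℕ) (y : ℕ → ℕ) : Prop :=
  ∀ n : ℕ, y n < c ((List.range n).map y)

/-- `V_μ(y) = Σ_{e ∈ y} (μ(e) R(e))^s` along an infinite ray. -/
def rayPot (μ R : Vtx → ℝ≥0∞) (s : ℝ) (y : ℕ → ℕ) : ℝ≥0∞ :=
  ∑' n : ℕ, (μ ((List.range (n + 1)).map y) * R ((List.range (n + 1)).map y)) ^ s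

/-- `V_μ` along the maximal path from the root to a leaf `ℓ`. -/
def leafPot (μ R : Vtx → ℝ≥0∞) (s : ℝ) (ℓ : Vtx) : ℝ≥0∞ :=
  ∑ k ∈ Finset.range ℓ.length, (μ (ℓ.take (k + 1)) * R (ℓ.take (k + 1))) ^ s

/-- `cap_p` of an infinite leafless tree. -/
def capInf (c : Vtx → ℕ) (R : Vtx → ℝ≥0∞) (p : ℝ) : ℝ≥0∞ :=
  sSup {m | ∃ μ : Vtx → ℝ≥0∞, IsFlow c μ ∧
    (∀ y : ℕ → ℕ, IsRay c y → rayPot μ R (p - 1) y ≤ 1) ∧ m = flowMass c μ}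

/-- `cap_p` of a finite tree. -/
def capFin (c : Vtx → ℕ) (R : Vtx → ℝ≥0∞) (p : ℝ) : ℝ≥0∞ :=
  sSup {m | ∃ μ : Vtx → ℝ≥0∞, IsFlow c μ ∧
    (∀ ℓ : Vtx, IsVtx c ℓ → c ℓ = 0 → leafPot μ R (p - 1) ℓ ≤ 1) ∧ m = flowMass c μ}

/-- The set of vertices at distance `n` from the root. -/
def lev (c : Vtx → ℕ) : ℕ → Finset Vtx
  | 0 => {([] : Vtx)}
  | n + 1 => (lev c n).biUnion fun v => (Finset.range (c v)).image fun i => v ++ [i]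

/-- The vertices of the truncated tree `T^(N)`. -/
def verts (c : Vtx → ℕ) (N : ℕ) : Finset Vtx := (Finset.range (N + 1)).biUnion (lev c)

/-- Spin configurations on `T^(N)`. -/
def Conf (c : Vtx → ℕ) (N : ℕ) := {v // v ∈ verts c N} → Bool

instance (c : Vtx → ℕ) (N : ℕ) : Fintype (Conf c N) := by unfold Conf; infer_instance

/-- The ±1 spin of a configuration at a vertex. -/
def spin (c : Vtx → ℕ) (N : ℕ) (σ : Conf c N) (w : Vtx) : ℝ :=
  if h : w ∈ verts c N then (if σ ⟨w, h⟩ then 1 else -1) else 1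

/-- The weight `W(η) = Π_{v → w} exp(β J_w η(v) η(w))` of a configuration on `T^(N)`. -/
def wt (c : Vtx → ℕ) (J : Vtx → ℝ) (β : ℝ) (N : ℕ) (σ : Conf c N) : ℝ :=
  ∏ w ∈ (Finset.range N).biUnion (fun n => lev c (n + 1)),
    Real.exp (β * J w * spin c N σ w.dropLast * spin c N σ w)

/-- `P^(N,+)(η(o) = +1)`: probability of a plus spin at the root under plus boundary
conditions at level `N`. -/
def plusProb (c : Vtx → ℕ) (J : Vtx → ℝ) (β : ℝ) (N : ℕ) : ℝ :=
  (∑ σ : Conf c N, if (∀ x : {v // v ∈ verts c N}, x.1 ∈ lev c N → σ x = true)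
      ∧ spin c N σ [] = 1 then wt c J β N σ else 0) /
  (∑ σ : Conf c N, if (∀ x : {v // v ∈ verts c N}, x.1 ∈ lev c N → σ x = true)
      then wt c J β N σ else 0)


noncomputable section
namespace IsingSS
open Real

/-- artanh -/
def ath (y : ℝ) : ℝ := Real.log ((1 + y) / (1 - y)) / 2

lemma tanh_eq_exp (x : ℝ) : Real.tanh x = (Real.exp (2*x) - 1) / (Real.exp (2*x) + 1) := by
  rw [Real.tanh_eq_sinh_div_cosh, Real.sinh_eq, Real.cosh_eq]
  rw [show (2:ℝ)*x = x + x by ring, Real.exp_add]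
  have h1 := Real.exp_pos x
  have h2 := Real.exp_pos (-x)
  have h3 : Real.exp x * Real.exp (-x) = 1 := by rw [← Real.exp_add]; simp
  rw [div_eq_div_iff (by positivity) (by positivity)]
  nlinarith [h1, h2]

lemma exp_two_ath {y : ℝ} (h0 : 0 ≤ y) (h1 : y < 1) :
    Real.exp (2 * ath y) = (1 + y) / (1 - y) := by
  rw [ath, show 2 * (Real.log ((1+y)/(1-y)) / 2) = Real.log ((1+y)/(1-y)) by ring]
  exact Real.exp_log (div_pos (by linarith) (by linarith))

lemma tanh_nat_ath (d : ℕ) {y : ℝ} (h0 : 0 ≤ y) (h1 : y < 1) :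
    Real.tanh (d * ath y) = ((1+y)^d - (1-y)^d) / ((1+y)^d + (1-y)^d) := by
  have hy1 : (0:ℝ) < 1 - y := by linarith
  have hy2 : (0:ℝ) < 1 + y := by linarith
  have he : Real.exp (2 * (d * ath y)) = (1+y)^d / (1-y)^d := by
    rw [show (2:ℝ) * (d * ath y) = d * (2 * ath y) by ring, Real.exp_nat_mul,
      exp_two_ath h0 h1, div_pow]
  rw [tanh_eq_exp, he]
  rw [div_eq_div_iff]
  · field_simp
  · have : (0:ℝ) < (1+y)^d / (1-y)^d := by positivity
    linarith
  · positivity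

lemma tanh_ath {y : ℝ} (h0 : 0 ≤ y) (h1 : y < 1) : Real.tanh (ath y) = y := by
  have := tanh_nat_ath 1 h0 h1
  simp only [Nat.cast_one, one_mul, pow_one] at this
  rw [this]
  have hy1 : (0:ℝ) < 1 - y := by linarith
  field_simp
  ring

lemma ath_pos {y : ℝ} (h0 : 0 < y) (h1 : y < 1) : 0 < ath y := by
  have : (1:ℝ) < (1 + y) / (1 - y) := by
    rw [lt_div_iff₀ (by linarith)]; linarith
  have := Real.log_pos this
  unfold ath; linarith

lemma ath_nonneg {y : ℝ} (h0 : 0 ≤ y) (h1 : y < 1) : 0 ≤ ath y := by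
  rcases eq_or_lt_of_le h0 with h | h
  · simp [ath, ← h]
  · exact le_of_lt (ath_pos h h1)

lemma tanh_pos {x : ℝ} (hx : 0 < x) : 0 < Real.tanh x := by
  rw [Real.tanh_eq_sinh_div_cosh]
  exact div_pos (Real.sinh_pos_iff.2 hx) (Real.cosh_pos x)

lemma tanh_nonneg {x : ℝ} (hx : 0 ≤ x) : 0 ≤ Real.tanh x := by
  rcases eq_or_lt_of_le hx with h | h
  · simp [← h]
  · exact le_of_lt (tanh_pos h)

lemma tanh_lt_one (x : ℝ) : Real.tanh x < 1 := by
  rw [Real.tanh_eq_sinh_div_cosh, div_lt_one (Real.cosh_pos x)]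
  have := Real.cosh_sub_sinh x
  have := Real.exp_pos (-x)
  linarith

lemma sinh_nonneg' {x : ℝ} (hx : 0 ≤ x) : 0 ≤ Real.sinh x := by
  rcases eq_or_lt_of_le hx with h | h
  · simp [← h]
  · exact le_of_lt (Real.sinh_pos_iff.2 h)

lemma tanh_mono {a b : ℝ} (h : a ≤ b) : Real.tanh a ≤ Real.tanh b := by
  have ca := Real.cosh_pos a
  have cb := Real.cosh_pos b
  rw [Real.tanh_eq_sinh_div_cosh, Real.tanh_eq_sinh_div_cosh,
    div_le_div_iff₀ ca cb]
  have hs : 0 ≤ Real.sinh (b - a) := sinh_nonneg' (by linarith)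
  rw [Real.sinh_sub] at hs
  nlinarith

/-- `sinh x ≤ x * cosh x` for `x ≥ 0`. -/
lemma sinh_le_mul_cosh {x : ℝ} (hx : 0 ≤ x) : Real.sinh x ≤ x * Real.cosh x := by
  have key : ∀ y : ℝ, HasDerivAt (fun t => t * Real.cosh t - Real.sinh t)
      (y * Real.sinh y) y := by
    intro y
    have h1 : HasDerivAt (fun t : ℝ => t * Real.cosh t)
        (1 * Real.cosh y + y * Real.sinh y) y :=
      (hasDerivAt_id y).mul (Real.hasDerivAt_cosh y)
    have := h1.sub (Real.hasDerivAt_sinh y)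
    exact this.congr_deriv (by ring)
  have mono : MonotoneOn (fun t => t * Real.cosh t - Real.sinh t) (Set.Ici 0) := by
    apply monotoneOn_of_deriv_nonneg (convex_Ici 0)
    · exact Continuous.continuousOn (by continuity)
    · intro y hy
      exact (key y).differentiableAt.differentiableWithinAt
    · intro y hy
      rw [interior_Ici] at hy
      rw [(key y).deriv]
      exact mul_nonneg (le_of_lt hy) (sinh_nonneg' (le_of_lt hy))
  have h0 := mono Set.self_mem_Ici (Set.mem_Ici.2 hx) hx
  simp only [Real.sinh_zero, Real.cosh_zero, mul_one, zero_mul, sub_zero, mul_zero] at h0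
  linarith [h0]

lemma tanh_le_self {x : ℝ} (hx : 0 ≤ x) : Real.tanh x ≤ x := by
  rw [Real.tanh_eq_sinh_div_cosh, div_le_iff₀ (Real.cosh_pos x)]
  exact sinh_le_mul_cosh hx

lemma self_le_ath {y : ℝ} (h0 : 0 ≤ y) (h1 : y < 1) : y ≤ ath y := by
  have := tanh_le_self (ath_nonneg h0 h1)
  rwa [tanh_ath h0 h1] at this

/-- `sinh x - x ≤ x^2/6 * sinh x` for `x ≥ 0`. -/
lemma sinh_cubic {x : ℝ} (hx : 0 ≤ x) : Real.sinh x - x ≤ x^2/6 * Real.sinh x := by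
  set g : ℝ → ℝ := fun t => t^2/6 * Real.sinh t - Real.sinh t + t with hg
  have keyg : ∀ y : ℝ, HasDerivAt g
      (y/3 * Real.sinh y + y^2/6 * Real.cosh y - Real.cosh y + 1) y := by
    intro y
    have h1 : HasDerivAt (fun t : ℝ => t^2/6 * Real.sinh t)
        ((2*y/6) * Real.sinh y + y^2/6 * Real.cosh y) y := by
      have hp : HasDerivAt (fun t : ℝ => t^2/6) (2*y/6) y := by
        have := (hasDerivAt_pow 2 y).div_const 6
        norm_num at this
        convert this using 1
        try ring
      exact hp.mul (Real.hasDerivAt_sinh y)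
    have := (h1.sub (Real.hasDerivAt_sinh y)).add (hasDerivAt_id y)
    exact this.congr_deriv (by ring)
  have keyg' : ∀ y : ℝ, HasDerivAt
      (fun t => t/3 * Real.sinh t + t^2/6 * Real.cosh t - Real.cosh t + 1)
      (1/3 * Real.sinh y + y/3 * Real.cosh y
        + ((2*y/6) * Real.cosh y + y^2/6 * Real.sinh y) - Real.sinh y) y := by
    intro y
    have h1 : HasDerivAt (fun t : ℝ => t/3 * Real.sinh t)
        (1/3 * Real.sinh y + y/3 * Real.cosh y) y := by
      have hp : HasDerivAt (fun t : ℝ => t/3) (1/3) y := (hasDerivAt_id y).div_const 3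
      have := hp.mul (Real.hasDerivAt_sinh y)
      exact this
    have h2 : HasDerivAt (fun t : ℝ => t^2/6 * Real.cosh t)
        ((2*y/6) * Real.cosh y + y^2/6 * Real.sinh y) y := by
      have hp : HasDerivAt (fun t : ℝ => t^2/6) (2*y/6) y := by
        have := (hasDerivAt_pow 2 y).div_const 6
        norm_num at this
        convert this using 1
        try ring
      exact hp.mul (Real.hasDerivAt_cosh y)
    have := ((h1.add h2).sub (Real.hasDerivAt_cosh y)).add_const 1
    exact this
  -- gderiv is nonneg on Ici 0
  have mono' : MonotoneOn (fun t => t/3 * Real.sinh t + t^2/6 * Real.cosh t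
      - Real.cosh t + 1) (Set.Ici 0) := by
    apply monotoneOn_of_deriv_nonneg (convex_Ici 0)
    · exact Continuous.continuousOn (by continuity)
    · intro y hy; exact (keyg' y).differentiableAt.differentiableWithinAt
    · intro y hy
      rw [interior_Ici] at hy
      rw [(keyg' y).deriv]
      have h1 : Real.sinh y ≤ y * Real.cosh y := sinh_le_mul_cosh (le_of_lt hy)
      have h2 : 0 ≤ Real.sinh y := sinh_nonneg' (le_of_lt hy)
      nlinarith
  have hder0 : ∀ y ∈ Set.Ici (0:ℝ),
      0 ≤ y/3 * Real.sinh y + y^2/6 * Real.cosh y - Real.cosh y + 1 := by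
    intro y hy
    have := mono' Set.self_mem_Ici hy hy
    simp only [Real.sinh_zero, Real.cosh_zero, mul_zero, zero_mul, mul_one, zero_div,
      zero_pow, sub_zero] at this
    norm_num at this
    linarith [this]
  have mono : MonotoneOn g (Set.Ici 0) := by
    apply monotoneOn_of_deriv_nonneg (convex_Ici 0)
    · exact Continuous.continuousOn (by continuity)
    · intro y hy; exact (keyg y).differentiableAt.differentiableWithinAt
    · intro y hy
      rw [interior_Ici] at hy
      rw [(keyg y).deriv]
      exact hder0 y (Set.mem_Ici.2 (le_of_lt hy))
  have h0 := mono Set.self_mem_Ici (Set.mem_Ici.2 hx) hx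
  simp only [hg, Real.sinh_zero, mul_zero, sub_zero, add_zero, zero_div, zero_pow,
    zero_mul] at h0
  norm_num at h0
  linarith [h0]

end IsingSS

noncomputable section
namespace IsingSS
open Real Finset

lemma ath_mono {y y' : ℝ} (h0 : 0 ≤ y) (h : y ≤ y') (h1 : y' < 1) : ath y ≤ ath y' := by
  have p1 : (0:ℝ) < 1 - y' := by linarith
  have p2 : (0:ℝ) < 1 - y := by linarith
  have : (1 + y)/(1 - y) ≤ (1 + y')/(1 - y') := by
    rw [div_le_div_iff₀ p2 p1]; nlinarith
  have hlog := Real.log_le_log (by positivity) this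
  unfold ath; linarith

/-- `1/s² - 1/3 ≤ 1/sinh(s)²` for `s > 0`. -/
lemma inv_sinh_sq {s : ℝ} (hs : 0 < s) : 1/s^2 - 1/3 ≤ 1/(Real.sinh s)^2 := by
  have h1 : s < Real.sinh s := Real.self_lt_sinh_iff.2 hs
  have h2 : Real.sinh s - s ≤ s^2/6 * Real.sinh s := sinh_cubic hs.le
  have hsp : 0 < Real.sinh s := by linarith
  have key : Real.sinh s^2 - s^2 ≤ s^2 * Real.sinh s^2 / 3 := by nlinarith
  have e : 1/(Real.sinh s)^2 + 1/3 = (3 + Real.sinh s^2)/(3 * Real.sinh s^2) := by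
    field_simp
  rw [sub_le_iff_le_add, e, div_le_div_iff₀ (by positivity) (by positivity)]
  nlinarith

/-- `(1-y²)·sinh(ath y)² = y²`. -/
lemma sinh_ath_sq {y : ℝ} (h0 : 0 < y) (h1 : y < 1) :
    (1 - y^2) * Real.sinh (ath y)^2 = y^2 := by
  have ht := tanh_ath h0.le h1
  rw [Real.tanh_eq_sinh_div_cosh] at ht
  have hc := Real.cosh_pos (ath y)
  have hs : Real.sinh (ath y) = y * Real.cosh (ath y) := by
    field_simp at ht; linarith [ht]
  have hsq := Real.cosh_sq (ath y)
  linear_combination (Real.sinh (ath y) + y * Real.cosh (ath y)) * hs + y^2 * hsq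

lemma inv_ath_sq {y : ℝ} (h0 : 0 < y) (h1 : y < 1) : 1/y^2 - 1 ≤ 1/(ath y)^2 := by
  have ha : 0 < ath y := ath_pos h0 h1
  have h2 : ath y < Real.sinh (ath y) := Real.self_lt_sinh_iff.2 ha
  have hsp : 0 < Real.sinh (ath y) := by linarith
  have e : 1/(Real.sinh (ath y))^2 = 1/y^2 - 1 := by
    have := sinh_ath_sq h0 h1
    rw [eq_sub_iff_add_eq, div_add' _ _ _ (by positivity), div_eq_div_iff (by positivity) (by positivity)]
    nlinarith
  rw [← e]
  apply one_div_le_one_div_of_le (by positivity)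
  nlinarith

/-- The basic recursion map: `x ↦ tanh(d · artanh(θ x))`. -/
def ff (d : ℕ) (θ x : ℝ) : ℝ := Real.tanh (d * ath (θ * x))

section ffprops
variable {d : ℕ} {θ x : ℝ} (hd : 1 ≤ d) (hθ0 : 0 < θ) (hθ1 : θ < 1) (hx0 : 0 < x) (hx1 : x ≤ 1)
include hd hθ0 hθ1 hx0 hx1

lemma y_mem : 0 < θ * x ∧ θ * x < 1 := by
  constructor
  · positivity
  · nlinarith

lemma ff_pos : 0 < ff d θ x := by
  obtain ⟨hy0, hy1⟩ := y_mem hd hθ0 hθ1 hx0 hx1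
  have hdp : (0:ℝ) < (d:ℝ) := by exact_mod_cast hd
  exact tanh_pos (mul_pos hdp (ath_pos hy0 hy1))

lemma ff_lt_one : ff d θ x < 1 := tanh_lt_one _

lemma ff_mono {x' : ℝ} (hxx : x ≤ x') (hx1' : x' ≤ 1) : ff d θ x ≤ ff d θ x' := by
  apply tanh_mono
  apply mul_le_mul_of_nonneg_left _ (by positivity)
  apply ath_mono (by positivity) (by nlinarith) (by nlinarith)

/-- upper bound on `u = 1/ff²`. -/
lemma step_upper : 1/(ff d θ x)^2 ≤ (((d:ℝ) * θ)^2)⁻¹ * (1/x^2) + 1 := by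
  obtain ⟨hy0, hy1⟩ := y_mem hd hθ0 hθ1 hx0 hx1
  have hdp : (0:ℝ) < (d:ℝ) := by exact_mod_cast hd
  set S := (d:ℝ) * ath (θ * x) with hS
  have hS0 : 0 < S := mul_pos hdp (ath_pos hy0 hy1)
  have hsinh : S < Real.sinh S := Real.self_lt_sinh_iff.2 hS0
  have hA : (d:ℝ) * θ * x ≤ Real.sinh S := by
    have : θ * x ≤ ath (θ * x) := self_le_ath hy0.le hy1
    nlinarith
  have hApos : 0 < (d:ℝ) * θ * x := by positivity
  have hsp : 0 < Real.sinh S := lt_trans hS0 hsinh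
  have e1 : 1/(ff d θ x)^2 = 1/(Real.sinh S)^2 + 1 := by
    unfold ff
    rw [← hS, Real.tanh_eq_sinh_div_cosh, div_pow, one_div, inv_div, Real.cosh_sq]
    field_simp
    ring
  rw [e1]
  have h2 : 1/(Real.sinh S)^2 ≤ 1/((d:ℝ) * θ * x)^2 := by
    apply one_div_le_one_div_of_le (by positivity)
    nlinarith
  have e2 : 1/((d:ℝ) * θ * x)^2 = (((d:ℝ) * θ)^2)⁻¹ * (1/x^2) := by
    field_simp
  linarith [e2 ▸ h2]

lemma step_lower (hd2 : 2 ≤ d) :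
    (((d:ℝ) * θ)^2)⁻¹ * (1/x^2) + 5/12 ≤ 1/(ff d θ x)^2 := by
  obtain ⟨hy0, hy1⟩ := y_mem hd hθ0 hθ1 hx0 hx1
  have hdp : (0:ℝ) < (d:ℝ) := by exact_mod_cast hd
  have hd2' : (2:ℝ) ≤ (d:ℝ) := by exact_mod_cast hd2
  set S := (d:ℝ) * ath (θ * x) with hS
  have ha0 : 0 < ath (θ * x) := ath_pos hy0 hy1
  have hS0 : 0 < S := mul_pos hdp ha0
  have hsinh : S < Real.sinh S := Real.self_lt_sinh_iff.2 hS0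
  have hsp : 0 < Real.sinh S := lt_trans hS0 hsinh
  have e1 : 1/(ff d θ x)^2 = 1/(Real.sinh S)^2 + 1 := by
    unfold ff
    rw [← hS, Real.tanh_eq_sinh_div_cosh, div_pow, one_div, inv_div, Real.cosh_sq]
    field_simp
    ring
  rw [e1]
  have h1 : 1/S^2 - 1/3 ≤ 1/(Real.sinh S)^2 := inv_sinh_sq hS0
  have h2 : 1/(θ*x)^2 - 1 ≤ 1/(ath (θ*x))^2 := inv_ath_sq hy0 hy1
  have e2 : 1/S^2 = ((d:ℝ)^2)⁻¹ * (1/(ath (θ*x))^2) := by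
    rw [hS]; field_simp
  have e3 : ((d:ℝ)^2)⁻¹ * (1/(θ*x)^2) = (((d:ℝ) * θ)^2)⁻¹ * (1/x^2) := by
    field_simp
  have hd4 : ((d:ℝ)^2)⁻¹ ≤ 1/4 := by
    rw [inv_le_comm₀ (by positivity) (by norm_num)]
    nlinarith
  have h3 : ((d:ℝ)^2)⁻¹ * (1/(θ*x)^2) - ((d:ℝ)^2)⁻¹ ≤ 1/S^2 := by
    rw [e2]
    have := mul_le_mul_of_nonneg_left h2 (le_of_lt (by positivity : (0:ℝ) < ((d:ℝ)^2)⁻¹))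
    linarith [this]
  linarith

lemma ff_one_eq : ff 1 θ x = θ * x := by
  obtain ⟨hy0, hy1⟩ := y_mem hd hθ0 hθ1 hx0 hx1
  unfold ff
  rw [Nat.cast_one, one_mul, tanh_ath hy0.le hy1]

end ffprops

end IsingSS

noncomputable section
namespace IsingSS
open Real Finset

/-- Hypotheses on the level data. -/
def Hyp (dd : ℕ → ℕ) (th : ℕ → ℝ) : Prop := ∀ n, 1 ≤ n → 1 ≤ dd n ∧ 0 < th n ∧ th n < 1

lemma Hyp.shift {dd th} (h : Hyp dd th) : Hyp (fun n => dd (n+1)) (fun n => th (n+1)) :=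
  fun n _ => h (n+1) (by omega)

/-- The root magnetization of the depth-`N` tree with plus boundary. -/
def mg : ℕ → (ℕ → ℕ) → (ℕ → ℝ) → ℝ
  | 0, _, _ => 1
  | (N+1), dd, th => ff (dd 1) (th 1) (mg N (fun n => dd (n+1)) (fun n => th (n+1)))

lemma mg_mem {dd th} (h : Hyp dd th) : ∀ N, 0 < mg N dd th ∧ mg N dd th ≤ 1 := by
  intro N
  induction N generalizing dd th with
  | zero => exact ⟨one_pos, le_refl 1⟩
  | succ N ih =>
    obtain ⟨h1, h2, h3⟩ := h 1 (le_refl 1)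
    obtain ⟨hx0, hx1⟩ := ih h.shift
    exact ⟨ff_pos h1 h2 h3 hx0 hx1, le_of_lt (ff_lt_one h1 h2 h3 hx0 hx1)⟩

lemma mg_anti {dd th} (h : Hyp dd th) : ∀ N, mg (N+1) dd th ≤ mg N dd th := by
  intro N
  induction N generalizing dd th with
  | zero =>
    obtain ⟨h1, h2, h3⟩ := h 1 (le_refl 1)
    exact le_of_lt (ff_lt_one h1 h2 h3 one_pos (le_refl 1))
  | succ N ih =>
    obtain ⟨h1, h2, h3⟩ := h 1 (le_refl 1)
    obtain ⟨hx0, hx1⟩ := mg_mem h.shift (N+1)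
    obtain ⟨hx0', hx1'⟩ := mg_mem h.shift N
    exact ff_mono h1 h2 h3 hx0 hx1 (ih h.shift) hx1'

/-- `P_k = ∏_{i=1}^k (d_i θ_i)^{-2}`. -/
def Pk (dd : ℕ → ℕ) (th : ℕ → ℝ) (k : ℕ) : ℝ :=
  ∏ j ∈ Finset.range k, (((dd (j+1) : ℝ) * th (j+1))^2)⁻¹

lemma Pk_pos {dd th} (h : Hyp dd th) (k : ℕ) : 0 < Pk dd th k := by
  apply Finset.prod_pos
  intro j _
  obtain ⟨h1, h2, _⟩ := h (j+1) (by omega)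
  have : (0:ℝ) < (dd (j+1) : ℝ) := by exact_mod_cast h1
  positivity

lemma Pk_succ' (dd th) (k : ℕ) :
    Pk dd th (k+1) = (((dd 1 : ℝ) * th 1)^2)⁻¹
      * Pk (fun n => dd (n+1)) (fun n => th (n+1)) k := by
  rw [Pk, Finset.prod_range_succ']
  rw [mul_comm]
  rfl

lemma mg_upper {dd th} (h : Hyp dd th) :
    ∀ N, 1/(mg N dd th)^2 ≤ ∑ k ∈ Finset.range (N+1), Pk dd th k := by
  intro N
  induction N generalizing dd th with
  | zero => simp [mg, Pk]
  | succ N ih =>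
    obtain ⟨h1, h2, h3⟩ := h 1 (le_refl 1)
    obtain ⟨hx0, hx1⟩ := mg_mem h.shift N
    have hstep := step_upper h1 h2 h3 hx0 hx1
    have hIH := ih h.shift
    have hq : (0:ℝ) ≤ (((dd 1 : ℝ) * th 1)^2)⁻¹ := by positivity
    have : (mg (N+1) dd th) = ff (dd 1) (th 1) (mg N (fun n => dd (n+1)) (fun n => th (n+1))) := rfl
    rw [this]
    calc 1/(ff (dd 1) (th 1) (mg N (fun n => dd (n+1)) (fun n => th (n+1))))^2
        ≤ (((dd 1:ℝ) * th 1)^2)⁻¹ * (1/(mg N (fun n => dd (n+1)) (fun n => th (n+1)))^2) + 1 := hstep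
      _ ≤ (((dd 1:ℝ) * th 1)^2)⁻¹ * (∑ k ∈ Finset.range (N+1),
            Pk (fun n => dd (n+1)) (fun n => th (n+1)) k) + 1 :=
          by gcongr
      _ = ∑ k ∈ Finset.range (N+2), Pk dd th k := by
          rw [Finset.sum_range_succ' (fun k => Pk dd th k) (N+1), Finset.mul_sum]
          have h0 : Pk dd th 0 = 1 := by simp [Pk]
          rw [h0]
          congr 1
          apply Finset.sum_congr rfl
          intro k _
          rw [Pk_succ']

lemma mg_lower {dd th} (h : Hyp dd th) :
    ∀ N, Pk dd th N + (5/12) * ∑ k ∈ Finset.range N,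
        (if 2 ≤ dd (k+1) then Pk dd th k else 0) ≤ 1/(mg N dd th)^2 := by
  intro N
  induction N generalizing dd th with
  | zero => simp [mg, Pk]
  | succ N ih =>
    obtain ⟨h1, h2, h3⟩ := h 1 (le_refl 1)
    obtain ⟨hx0, hx1⟩ := mg_mem h.shift N
    have hIH := ih h.shift
    set x := mg N (fun n => dd (n+1)) (fun n => th (n+1)) with hx
    have hmg : mg (N+1) dd th = ff (dd 1) (th 1) x := rfl
    have hq : (0:ℝ) < (((dd 1 : ℝ) * th 1)^2)⁻¹ := by
      have : (0:ℝ) < (dd 1 : ℝ) := by exact_mod_cast h1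
      positivity
    -- rewrite RHS sum
    have hsum : ∑ k ∈ Finset.range (N+1), (if 2 ≤ dd (k+1) then Pk dd th k else 0)
        = (∑ k ∈ Finset.range N, (if 2 ≤ dd (k+2) then Pk dd th (k+1) else 0))
          + (if 2 ≤ dd 1 then Pk dd th 0 else 0) := by
      rw [Finset.sum_range_succ' (fun k => if 2 ≤ dd (k+1) then Pk dd th k else 0) N]
    have hPk1 : ∀ k, Pk dd th (k+1) = (((dd 1 : ℝ) * th 1)^2)⁻¹
        * Pk (fun n => dd (n+1)) (fun n => th (n+1)) k := Pk_succ' dd th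
    have hmul := mul_le_mul_of_nonneg_left hIH hq.le
    have hdist : (((dd 1 : ℝ) * th 1)^2)⁻¹ * (Pk (fun n => dd (n+1)) (fun n => th (n+1)) N
          + (5/12) * ∑ k ∈ Finset.range N,
            (if 2 ≤ dd (k+2) then Pk (fun n => dd (n+1)) (fun n => th (n+1)) k else 0))
        = Pk dd th (N+1) + (5/12) * ∑ k ∈ Finset.range N,
            (if 2 ≤ dd (k+2) then Pk dd th (k+1) else 0) := by
      rw [mul_add, ← hPk1]
      congr 1
      rw [mul_left_comm, Finset.mul_sum]
      congr 1
      apply Finset.sum_congr rfl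
      intro k _
      rw [mul_ite, mul_zero, ← hPk1]
    rcases Nat.lt_or_ge (dd 1) 2 with hd1 | hd1
    · -- dd 1 = 1
      have hd1' : dd 1 = 1 := by omega
      have hffeq : ff (dd 1) (th 1) x = th 1 * x := by
        rw [hd1']; exact ff_one_eq (le_refl 1) h2 h3 hx0 hx1
      have hval : 1/(mg (N+1) dd th)^2 = (((dd 1 : ℝ) * th 1)^2)⁻¹ * (1/x^2) := by
        rw [hmg, hffeq, hd1']
        field_simp
        ring
      rw [hval, hsum]
      have hno : (if 2 ≤ dd 1 then Pk dd th 0 else 0) = 0 := by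
        rw [if_neg (by omega)]
      rw [hno, add_zero]
      calc Pk dd th (N+1) + 5/12 * ∑ k ∈ Finset.range N, (if 2 ≤ dd (k+2) then Pk dd th (k+1) else 0)
          = (((dd 1 : ℝ) * th 1)^2)⁻¹ * (Pk (fun n => dd (n+1)) (fun n => th (n+1)) N
            + (5/12) * ∑ k ∈ Finset.range N,
              (if 2 ≤ dd (k+2) then Pk (fun n => dd (n+1)) (fun n => th (n+1)) k else 0)) := hdist.symm
        _ ≤ (((dd 1 : ℝ) * th 1)^2)⁻¹ * (1/x^2) := by
            apply mul_le_mul_of_nonneg_left hIH hq.le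
    · -- dd 1 ≥ 2
      have hstep := step_lower h1 h2 h3 hx0 hx1 hd1
      rw [hmg, hsum]
      have hyes : (if 2 ≤ dd 1 then Pk dd th 0 else 0) = 1 := by
        rw [if_pos hd1]; simp [Pk]
      rw [hyes]
      have : Pk dd th (N+1) + 5/12 * ((∑ k ∈ Finset.range N,
            (if 2 ≤ dd (k+2) then Pk dd th (k+1) else 0)) + 1)
          ≤ (((dd 1:ℝ) * th 1)^2)⁻¹ * (1/x^2) + 5/12 := by
        have := hdist ▸ hmul
        linarith
      linarith [hstep, this]

end IsingSS

noncomputable section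
namespace IsingSS
open Real Finset

def sgnb (b : Bool) : ℝ := if b then 1 else -1

/-- child subtree child-count function -/
def sub (c : Vtx → ℕ) (i : ℕ) : Vtx → ℕ := fun v => c (i :: v)

lemma mem_lev_length {c : Vtx → ℕ} : ∀ {n : ℕ} {w : Vtx}, w ∈ lev c n → w.length = n := by
  intro n
  induction n with
  | zero => intro w hw; simp [lev] at hw; simp [hw]
  | succ n ih =>
    intro w hw
    simp only [lev, Finset.mem_biUnion, Finset.mem_image, Finset.mem_range] at hw
    obtain ⟨v, hv, i, hi, rfl⟩ := hw
    simp [ih hv]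

lemma lev_succ_def (c : Vtx → ℕ) (n : ℕ) : lev c (n+1) =
    (lev c n).biUnion fun v => (Finset.range (c v)).image fun i => v ++ [i] := rfl

lemma lev_succ (c : Vtx → ℕ) : ∀ n, lev c (n+1) =
    (Finset.range (c [])).biUnion fun i => (lev (sub c i) n).image (fun w => i :: w) := by
  intro n
  induction n with
  | zero =>
    ext w
    simp only [lev, Finset.mem_biUnion, Finset.mem_image, Finset.mem_range, Finset.mem_singleton]
    constructor
    · rintro ⟨v, rfl, i, hi, rfl⟩
      exact ⟨i, hi, ⟨[], rfl, rfl⟩⟩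
    · rintro ⟨i, hi, u, rfl, rfl⟩
      exact ⟨[], rfl, i, hi, rfl⟩
  | succ n ih =>
    rw [lev_succ_def c (n+1), ih]
    ext w
    simp only [lev_succ_def, Finset.mem_biUnion, Finset.mem_image, Finset.mem_range]
    constructor
    · rintro ⟨v, ⟨i0, hi0, v', hv', rfl⟩, i, hi, rfl⟩
      exact ⟨i0, hi0, v' ++ [i], ⟨v', hv', i, hi, rfl⟩, rfl⟩
    · rintro ⟨i, hi, u, ⟨v', hv', j, hj, rfl⟩, rfl⟩
      exact ⟨i :: v', ⟨i, hi, v', hv', rfl⟩, j, hj, rfl⟩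

lemma root_mem_verts (c : Vtx → ℕ) (N : ℕ) : [] ∈ verts c N := by
  simp only [verts, Finset.mem_biUnion, Finset.mem_range]
  exact ⟨0, by omega, by simp [lev]⟩

lemma lev_subset_verts {c : Vtx → ℕ} {n N : ℕ} (h : n ≤ N) : lev c n ⊆ verts c N := by
  intro w hw
  simp only [verts, Finset.mem_biUnion, Finset.mem_range]
  exact ⟨n, by omega, hw⟩

/-- the edge set of `T^(N)` -/
def Edg (c : Vtx → ℕ) (N : ℕ) : Finset Vtx := (Finset.range N).biUnion (fun n => lev c (n + 1))

lemma wt_def (c J β N σ) : wt c J β N σ =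
    ∏ w ∈ Edg c N, Real.exp (β * J w * spin c N σ w.dropLast * spin c N σ w) := rfl

lemma root_not_mem_Edg (c : Vtx → ℕ) (N : ℕ) : [] ∉ Edg c N := by
  simp only [Edg, Finset.mem_biUnion, Finset.mem_range]
  rintro ⟨n, hn, h⟩
  have := mem_lev_length h
  simp at this

lemma verts_eq_insert (c : Vtx → ℕ) (N : ℕ) : verts c N = insert [] (Edg c N) := by
  ext w
  simp only [verts, Edg, Finset.mem_insert, Finset.mem_biUnion, Finset.mem_range]
  constructor
  · rintro ⟨n, hn, h⟩
    match n with
    | 0 => left; simpa [lev] using h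
    | n+1 => right; exact ⟨n, by omega, h⟩
  · rintro (rfl | ⟨n, hn, h⟩)
    · exact ⟨0, by omega, by simp [lev]⟩
    · exact ⟨n+1, by omega, h⟩

lemma Edg_succ (c : Vtx → ℕ) (N : ℕ) : Edg c (N+1) =
    (Finset.range (c [])).biUnion fun i => (verts (sub c i) N).image (fun w => i :: w) := by
  ext w
  simp only [Edg, verts, Finset.mem_biUnion, Finset.mem_range, Finset.mem_image]
  constructor
  · rintro ⟨n, hn, h⟩
    rw [lev_succ] at h
    simp only [Finset.mem_biUnion, Finset.mem_image, Finset.mem_range] at h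
    obtain ⟨i, hi, u, hu, rfl⟩ := h
    exact ⟨i, hi, u, ⟨n, hn, hu⟩, rfl⟩
  · rintro ⟨i, hi, u, ⟨n, hn, hu⟩, rfl⟩
    refine ⟨n, hn, ?_⟩
    rw [lev_succ]
    simp only [Finset.mem_biUnion, Finset.mem_image, Finset.mem_range]
    exact ⟨i, hi, u, hu, rfl⟩

lemma cons_mem_verts_succ {c : Vtx → ℕ} {N : ℕ} {i : ℕ} {w : Vtx} :
    (i :: w) ∈ verts c (N+1) ↔ i < c [] ∧ w ∈ verts (sub c i) N := by
  rw [verts_eq_insert, Edg_succ]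
  simp only [Finset.mem_insert, Finset.mem_biUnion, Finset.mem_image, Finset.mem_range]
  constructor
  · rintro (h | ⟨j, hj, u, hu, he⟩)
    · simp at h
    · obtain ⟨rfl, rfl⟩ : j = i ∧ u = w := by
        constructor <;> [exact (List.cons.injEq _ _ _ _ ▸ he).1; exact (List.cons.injEq _ _ _ _ ▸ he).2]
      exact ⟨hj, hu⟩
  · rintro ⟨hi, hw⟩
    exact Or.inr ⟨i, hi, w, hw, rfl⟩

end IsingSS

noncomputable section
namespace IsingSS
open Real Finset

lemma verts_zero (c : Vtx → ℕ) : verts c 0 = {([] : Vtx)} := by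
  ext w
  simp only [verts, Finset.mem_biUnion, Finset.mem_range, Finset.mem_singleton]
  constructor
  · rintro ⟨n, hn, h⟩
    interval_cases n
    simpa [lev] using h
  · rintro rfl
    exact ⟨0, by omega, by simp [lev]⟩

lemma ne_nil_of_mem_Edg {c : Vtx → ℕ} {N : ℕ} {w : Vtx} (h : w ∈ Edg c N) : w ≠ [] := by
  intro hw
  exact root_not_mem_Edg c N (hw ▸ h)

lemma cons_dropLast (i : ℕ) {w : Vtx} (hw : w ≠ []) : (i :: w).dropLast = i :: w.dropLast := by
  cases w with
  | nil => exact absurd rfl hw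
  | cons a l => rw [List.dropLast_cons₂]

/-- gluing a root spin and subtree configurations -/
def glue (c : Vtx → ℕ) (N : ℕ) (b : Bool) (g : ∀ i : Fin (c []), Conf (sub c i.1) N) :
    Conf c (N+1) :=
  fun x => match x.1 with
  | [] => b
  | i :: w => if h : i < c [] ∧ w ∈ verts (sub c i) N then g ⟨i, h.1⟩ ⟨w, h.2⟩ else true

lemma glue_root (c : Vtx → ℕ) (N : ℕ) (b g) (h : ([] : Vtx) ∈ verts c (N+1)) :
    glue c N b g ⟨[], h⟩ = b := rfl

lemma glue_cons (c : Vtx → ℕ) (N : ℕ) (b g) {i : ℕ} {w : Vtx}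
    (hmem : (i :: w) ∈ verts c (N+1)) (hi : i < c []) (hw : w ∈ verts (sub c i) N) :
    glue c N b g ⟨i :: w, hmem⟩ = g ⟨i, hi⟩ ⟨w, hw⟩ := dif_pos ⟨hi, hw⟩

lemma glue_bijective (c : Vtx → ℕ) (N : ℕ) :
    Function.Bijective (fun p : Bool × (∀ i : Fin (c []), Conf (sub c i.1) N) =>
      glue c N p.1 p.2) := by
  constructor
  · rintro ⟨b, g⟩ ⟨b', g'⟩ hEq
    simp only at hEq
    have hb : b = b' := congrFun hEq ⟨[], root_mem_verts c (N+1)⟩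
    have hg : g = g' := by
      funext i x
      have hmem : (i.1 :: x.1) ∈ verts c (N+1) := cons_mem_verts_succ.mpr ⟨i.2, x.2⟩
      have h2 := congrFun hEq ⟨i.1 :: x.1, hmem⟩
      rw [glue_cons c N b g hmem i.2 x.2, glue_cons c N b' g' hmem i.2 x.2] at h2
      exact h2
    simp [Prod.ext_iff]
    exact ⟨hb, hg⟩
  · intro σ
    refine ⟨⟨σ ⟨[], root_mem_verts c (N+1)⟩,
      fun i x => σ ⟨i.1 :: x.1, cons_mem_verts_succ.mpr ⟨i.2, x.2⟩⟩⟩, ?_⟩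
    funext x
    obtain ⟨v, hv⟩ := x
    match v with
    | [] => exact congrArg σ (Subtype.ext rfl)
    | i :: w =>
      obtain ⟨hi, hw⟩ := cons_mem_verts_succ.mp hv
      show glue c N _ _ ⟨i :: w, hv⟩ = σ ⟨i :: w, hv⟩
      rw [glue_cons c N _ _ hv hi hw]

lemma spin_eq_sgnb {c : Vtx → ℕ} {N : ℕ} (σ : Conf c N) {w : Vtx} (h : w ∈ verts c N) :
    spin c N σ w = sgnb (σ ⟨w, h⟩) := by
  rw [spin, dif_pos h]; rfl

lemma spin_root_glue (c : Vtx → ℕ) (N : ℕ) (b g) :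
    spin c (N+1) (glue c N b g) [] = sgnb b := by
  rw [spin, dif_pos (root_mem_verts c (N+1))]; rfl

lemma spin_glue_cons (c : Vtx → ℕ) (N : ℕ) (b g) {i : ℕ} (hi : i < c []) (w : Vtx) :
    spin c (N+1) (glue c N b g) (i :: w) = spin (sub c i) N (g ⟨i, hi⟩) w := by
  by_cases hw : w ∈ verts (sub c i) N
  · rw [spin, dif_pos (cons_mem_verts_succ.mpr ⟨hi, hw⟩), spin, dif_pos hw]
    have := glue_cons c N b g (cons_mem_verts_succ.mpr ⟨hi, hw⟩) hi hw
    rw [this]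
  · have hnm : (i :: w) ∉ verts c (N+1) := fun hmem => hw (cons_mem_verts_succ.mp hmem).2
    rw [spin, dif_neg hnm, spin, dif_neg hw]

set_option maxHeartbeats 1000000 in
lemma wt_glue (c : Vtx → ℕ) (J : Vtx → ℝ) (β : ℝ) (N : ℕ) (b : Bool) (g) :
    wt c J β (N+1) (glue c N b g) =
      ∏ i : Fin (c []), (Real.exp (β * J [i.1] * sgnb b * spin (sub c i.1) N (g i) [])
        * wt (sub c i.1) (fun v => J (i.1 :: v)) β N (g i)) := by
  rw [wt_def, Edg_succ]
  have hdisj : (↑(Finset.range (c [])) : Set ℕ).PairwiseDisjoint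
      (fun i => (verts (sub c i) N).image (fun w => i :: w)) := by
    intro a _ b' _ hab
    simp only [Finset.disjoint_left, Finset.mem_image]
    rintro x ⟨u, _, rfl⟩ ⟨u', _, he⟩
    exact hab (List.cons.injEq _ _ _ _ ▸ he).1.symm
  rw [Finset.prod_biUnion hdisj, ← Fin.prod_univ_eq_prod_range]
  apply Finset.prod_congr rfl
  intro i _
  rw [Finset.prod_image (by intro x _ y _ h; exact (List.cons.injEq _ _ _ _ ▸ h).2)]
  rw [verts_eq_insert, Finset.prod_insert (root_not_mem_Edg _ _)]
  congr 1
  · rw [show ([i.1] : Vtx).dropLast = [] from rfl, spin_root_glue c N b g,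
      spin_glue_cons c N b g i.2 []]
  · rw [wt_def]
    apply Finset.prod_congr rfl
    intro u hu
    have hu0 : u ≠ [] := ne_nil_of_mem_Edg hu
    rw [cons_dropLast i.1 hu0, spin_glue_cons c N b g i.2, spin_glue_cons c N b g i.2]

end IsingSS

noncomputable section
namespace IsingSS
open Real Finset

/-- plus boundary condition -/
def bcP (c : Vtx → ℕ) (N : ℕ) (σ : Conf c N) : Prop :=
  ∀ x : {v // v ∈ verts c N}, x.1 ∈ lev c N → σ x = true

/-- partition function with constrained root spin -/
def Zp (c : Vtx → ℕ) (J : Vtx → ℝ) (β : ℝ) (N : ℕ) (s : Bool) : ℝ :=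
  ∑ σ : Conf c N, if (bcP c N σ ∧ σ ⟨[], root_mem_verts c N⟩ = s)
    then wt c J β N σ else 0

lemma bcP_glue (c : Vtx → ℕ) (N : ℕ) (b g) :
    bcP c (N+1) (glue c N b g) ↔ ∀ i : Fin (c []), bcP (sub c i.1) N (g i) := by
  constructor
  · intro h i x hx
    have hxv : (i.1 :: x.1) ∈ lev c (N+1) := by
      rw [lev_succ]
      simp only [Finset.mem_biUnion, Finset.mem_image, Finset.mem_range]
      exact ⟨i.1, i.2, x.1, hx, rfl⟩
    have hmem : (i.1 :: x.1) ∈ verts c (N+1) := lev_subset_verts (le_refl (N+1)) hxv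
    have h2 := h ⟨_, hmem⟩ hxv
    rw [glue_cons c N b g hmem i.2 x.2] at h2
    exact h2
  · intro h x hx
    obtain ⟨v, hv⟩ := x
    rw [lev_succ] at hx
    simp only [Finset.mem_biUnion, Finset.mem_image, Finset.mem_range] at hx
    obtain ⟨i, hi, u, hu, rfl⟩ := hx
    have hw : u ∈ verts (sub c i) N := lev_subset_verts (le_refl N) hu
    rw [glue_cons c N b g hv hi hw]
    exact h ⟨i, hi⟩ ⟨u, hw⟩ hu

set_option maxHeartbeats 2000000 in
lemma plusProb_eq (c : Vtx → ℕ) (J : Vtx → ℝ) (β : ℝ) (N : ℕ) :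
    plusProb c J β N = Zp c J β N true / (Zp c J β N true + Zp c J β N false) := by
  unfold plusProb Zp
  congr 1
  · apply Finset.sum_congr rfl
    intro σ _
    have hs := spin_eq_sgnb σ (root_mem_verts c N)
    by_cases h1 : ∀ x : {v // v ∈ verts c N}, x.1 ∈ lev c N → σ x = true
    · by_cases h2 : σ ⟨[], root_mem_verts c N⟩ = true
      · rw [if_pos ⟨h1, by rw [hs, h2]; rfl⟩, if_pos ⟨h1, h2⟩]
      · rw [if_neg, if_neg (fun h => h2 h.2)]
        rintro ⟨-, hsp⟩
        rw [hs] at hsp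
        have h3 : σ ⟨[], root_mem_verts c N⟩ = false := by
          cases h : σ ⟨[], root_mem_verts c N⟩
          · rfl
          · exact absurd h h2
        rw [h3] at hsp
        norm_num [sgnb] at hsp
    · rw [if_neg (fun h => h1 h.1), if_neg (fun h => h1 h.1)]
  · rw [← Finset.sum_add_distrib]
    apply Finset.sum_congr rfl
    intro σ _
    by_cases h1 : ∀ x : {v // v ∈ verts c N}, x.1 ∈ lev c N → σ x = true
    · cases h2 : σ ⟨[], root_mem_verts c N⟩
      · rw [if_pos h1, if_neg (fun h => Bool.false_ne_true h.2), if_pos ⟨h1, rfl⟩, zero_add]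
      · rw [if_pos h1, if_pos ⟨h1, rfl⟩, if_neg (fun h => absurd h.2 (by simp)), add_zero]
    · rw [if_neg h1, if_neg (fun h => h1 h.1), if_neg (fun h => h1 h.1), add_zero]

lemma Zp_zero (c : Vtx → ℕ) (J : Vtx → ℝ) (β : ℝ) (s : Bool) :
    Zp c J β 0 s = if s then 1 else 0 := by
  have hbij : Function.Bijective (fun (b : Bool) => (fun _ => b : Conf c 0)) := by
    constructor
    · intro a b h
      exact congrFun h ⟨[], root_mem_verts c 0⟩
    · intro σ
      refine ⟨σ ⟨[], root_mem_verts c 0⟩, ?_⟩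
      funext x
      have hx : x.1 = [] := by
        obtain ⟨n, hn, hl⟩ := Finset.mem_biUnion.mp x.2
        have h1 : n = 0 := by
          have := Finset.mem_range.mp hn
          omega
        subst h1
        have := mem_lev_length hl
        exact List.length_eq_zero_iff.mp this
      exact congrArg σ (Subtype.ext hx.symm)
  have e1 : Zp c J β 0 s = ∑ b : Bool,
      (if (bcP c 0 (fun _ => b) ∧ b = s) then wt c J β 0 (fun _ => b) else 0) := by
    unfold Zp
    exact (Fintype.sum_bijective _ hbij _ _ (fun b => rfl)).symm
  rw [e1]
  have hbc : ∀ b : Bool, bcP c 0 (fun _ => b) ↔ b = true := by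
    intro b
    constructor
    · intro h
      exact h ⟨[], root_mem_verts c 0⟩ (by simp [lev])
    · intro hb x _
      exact hb
  have hwt : ∀ b : Bool, wt c J β 0 (fun _ => b) = 1 := by
    intro b
    unfold wt
    simp [Edg]
  rw [Fintype.sum_bool]
  rcases s with _ | _
  · simp [hbc, hwt]
  · simp [hbc, hwt]

lemma inner_sum (c' : Vtx → ℕ) (J' : Vtx → ℝ) (β : ℝ) (N : ℕ) (K : ℝ) :
    ∑ x : Conf c' N, (if bcP c' N x
        then Real.exp (K * spin c' N x []) * wt c' J' β N x else 0)
    = ∑ s' : Bool, Real.exp (K * sgnb s') * Zp c' J' β N s' := by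
  rw [Fintype.sum_bool]
  unfold Zp
  rw [Finset.mul_sum, Finset.mul_sum, ← Finset.sum_add_distrib]
  apply Finset.sum_congr rfl
  intro x _
  rw [spin_eq_sgnb x (root_mem_verts c' N)]
  by_cases hbc : bcP c' N x
  · cases h : x ⟨[], root_mem_verts c' N⟩
    · simp [hbc, h]
    · simp [hbc, h]
  · simp [hbc]

set_option maxHeartbeats 1000000 in
lemma Zp_succ (c : Vtx → ℕ) (J : Vtx → ℝ) (β : ℝ) (N : ℕ) (s : Bool) :
    Zp c J β (N+1) s = ∏ i ∈ Finset.range (c []),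
      (∑ s' : Bool, Real.exp (β * J [i] * sgnb s * sgnb s')
        * Zp (sub c i) (fun v => J (i :: v)) β N s') := by
  have e1 : Zp c J β (N+1) s = ∑ p : Bool × (∀ i : Fin (c []), Conf (sub c i.1) N),
      (if (bcP c (N+1) (glue c N p.1 p.2)
          ∧ glue c N p.1 p.2 ⟨[], root_mem_verts c (N+1)⟩ = s)
        then wt c J β (N+1) (glue c N p.1 p.2) else 0) := by
    unfold Zp
    exact (Fintype.sum_bijective _ (glue_bijective c N) _ _ (fun p => rfl)).symm
  rw [e1]
  have e2 : ∀ (bb : Bool) (g : ∀ i : Fin (c []), Conf (sub c i.1) N),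
      (if (bcP c (N+1) (glue c N bb g)
          ∧ glue c N bb g ⟨[], root_mem_verts c (N+1)⟩ = s)
        then wt c J β (N+1) (glue c N bb g) else 0)
      = (if bb = s then (1:ℝ) else 0) * ∏ i : Fin (c []),
          (if bcP (sub c i.1) N (g i) then
            Real.exp (β * J [i.1] * sgnb s * spin (sub c i.1) N (g i) [])
              * wt (sub c i.1) (fun v => J (i.1 :: v)) β N (g i) else 0) := by
    intro bb g
    by_cases hbb : bb = s
    · subst hbb
      by_cases hbc : ∀ i : Fin (c []), bcP (sub c i.1) N (g i)
      · rw [if_pos ⟨(bcP_glue c N bb g).mpr hbc, rfl⟩, if_pos rfl, one_mul, wt_glue]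
        apply Finset.prod_congr rfl
        intro i _
        rw [if_pos (hbc i)]
      · push_neg at hbc
        obtain ⟨i0, hi0⟩ := hbc
        rw [if_neg (fun h => hi0 ((bcP_glue c N bb g).mp h.1 i0))]
        have hz : (if bcP (sub c i0.1) N (g i0) then
            Real.exp (β * J [i0.1] * sgnb bb * spin (sub c i0.1) N (g i0) [])
              * wt (sub c i0.1) (fun v => J (i0.1 :: v)) β N (g i0) else (0:ℝ)) = 0 :=
          if_neg hi0
        rw [Finset.prod_eq_zero (Finset.mem_univ i0) hz, mul_zero]
    · rw [if_neg (fun h => hbb h.2), if_neg hbb, zero_mul]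
  simp only [e2]
  rw [Fintype.sum_prod_type]
  have e3 : ∀ b : Bool, ∑ g : (∀ i : Fin (c []), Conf (sub c i.1) N),
      ((if b = s then (1:ℝ) else 0) * ∏ i : Fin (c []),
        (if bcP (sub c i.1) N (g i) then
          Real.exp (β * J [i.1] * sgnb s * spin (sub c i.1) N (g i) [])
            * wt (sub c i.1) (fun v => J (i.1 :: v)) β N (g i) else 0))
      = (if b = s then (1:ℝ) else 0) * ∏ i : Fin (c []),
          (∑ x : Conf (sub c i.1) N, (if bcP (sub c i.1) N x then
            Real.exp (β * J [i.1] * sgnb s * spin (sub c i.1) N x [])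
              * wt (sub c i.1) (fun v => J (i.1 :: v)) β N x else 0)) := by
    intro b
    rw [← Finset.mul_sum]
    congr 1
    rw [Fintype.prod_sum]
  simp only [e3]
  have e4 : ∑ b : Bool, ((if b = s then (1:ℝ) else 0) * ∏ i : Fin (c []),
      (∑ x : Conf (sub c i.1) N, (if bcP (sub c i.1) N x then
        Real.exp (β * J [i.1] * sgnb s * spin (sub c i.1) N x [])
          * wt (sub c i.1) (fun v => J (i.1 :: v)) β N x else 0)))
      = ∏ i : Fin (c []),
      (∑ x : Conf (sub c i.1) N, (if bcP (sub c i.1) N x then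
        Real.exp (β * J [i.1] * sgnb s * spin (sub c i.1) N x [])
          * wt (sub c i.1) (fun v => J (i.1 :: v)) β N x else 0)) := by
    rw [Fintype.sum_bool]
    rcases s with _ | _ <;> simp
  rw [e4]
  rw [show (∏ i ∈ Finset.range (c []),
      (∑ s' : Bool, Real.exp (β * J [i] * sgnb s * sgnb s')
        * Zp (sub c i) (fun v => J (i :: v)) β N s'))
    = ∏ i : Fin (c []), (∑ s' : Bool, Real.exp (β * J [i.1] * sgnb s * sgnb s')
        * Zp (sub c i.1) (fun v => J (i.1 :: v)) β N s')
    from (Fin.prod_univ_eq_prod_range _ _).symm]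
  apply Finset.prod_congr rfl
  intro i _
  exact inner_sum (sub c i.1) (fun v => J (i.1 :: v)) β N (β * J [i.1] * sgnb s)

end IsingSS

noncomputable section
namespace IsingSS
open Real Finset

def pZ (β : ℝ) : ℕ → (ℕ → ℕ) → (ℕ → ℝ) → Bool → ℝ
  | 0, _, _, s => if s then 1 else 0
  | (N+1), dd, K, s => (∑ s' : Bool, Real.exp (β * K 1 * sgnb s * sgnb s')
      * pZ β N (fun n => dd (n+1)) (fun n => K (n+1)) s') ^ (dd 1)

lemma IsVtx_cons {c : Vtx → ℕ} {i : ℕ} (hi : i < c []) :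
    ∀ {v}, IsVtx (sub c i) v → IsVtx c (i :: v) := by
  intro v h
  induction h with
  | root => exact IsVtx.child IsVtx.root hi
  | @child v' j h' hj ih => exact (List.cons_append (a := i) (as := v') (bs := [j])) ▸ IsVtx.child ih hj

lemma Zp_eq_pZ (β : ℝ) : ∀ (N : ℕ) (c : Vtx → ℕ) (J : Vtx → ℝ) (dd : ℕ → ℕ) (K : ℕ → ℝ),
    (∀ v, IsVtx c v → c v = dd (v.length + 1)) →
    (∀ v, IsVtx c v → v ≠ [] → J v = K v.length) →
    ∀ s, Zp c J β N s = pZ β N dd K s := by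
  intro N
  induction N with
  | zero =>
    intro c J dd K hc hJ s
    rw [Zp_zero]
    rfl
  | succ N ih =>
    intro c J dd K hc hJ s
    rw [Zp_succ]
    have hroot : c [] = dd 1 := hc [] IsVtx.root
    have heach : ∀ i ∈ Finset.range (c []),
        (∑ s' : Bool, Real.exp (β * J [i] * sgnb s * sgnb s')
          * Zp (sub c i) (fun v => J (i :: v)) β N s')
        = ∑ s' : Bool, Real.exp (β * K 1 * sgnb s * sgnb s')
          * pZ β N (fun n => dd (n+1)) (fun n => K (n+1)) s' := by
      intro i hi
      have hiv : i < c [] := Finset.mem_range.mp hi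
      have hJi : J [i] = K 1 := hJ [i] (IsVtx.child IsVtx.root hiv) (by simp)
      rw [hJi]
      apply Finset.sum_congr rfl
      intro s' _
      congr 1
      apply ih (sub c i) (fun v => J (i :: v)) (fun n => dd (n+1)) (fun n => K (n+1))
      · intro v hv
        have := hc (i :: v) (IsVtx_cons hiv hv)
        simpa [sub] using this
      · intro v hv hne
        have := hJ (i :: v) (IsVtx_cons hiv hv) (by simp)
        simpa using this
    rw [Finset.prod_congr rfl heach, Finset.prod_const, Finset.card_range, hroot]
    rfl

lemma pZ_pos (β : ℝ) : ∀ (N : ℕ) (dd : ℕ → ℕ) (K : ℕ → ℝ),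
    0 < pZ β N dd K true ∧ 0 ≤ pZ β N dd K false := by
  intro N
  induction N with
  | zero => intro dd K; norm_num [pZ]
  | succ N ih =>
    intro dd K
    obtain ⟨h1, h2⟩ := ih (fun n => dd (n+1)) (fun n => K (n+1))
    constructor
    · show (0:ℝ) < (∑ s' : Bool, _) ^ (dd 1)
      apply pow_pos
      rw [Fintype.sum_bool]
      have e1 := Real.exp_pos (β * K 1 * sgnb true * sgnb true)
      have e2 := Real.exp_pos (β * K 1 * sgnb true * sgnb false)
      nlinarith [mul_pos e1 h1, mul_nonneg e2.le h2]
    · show (0:ℝ) ≤ (∑ s' : Bool, _) ^ (dd 1)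
      apply pow_nonneg
      rw [Fintype.sum_bool]
      have e1 := Real.exp_pos (β * K 1 * sgnb false * sgnb true)
      have e2 := Real.exp_pos (β * K 1 * sgnb false * sgnb false)
      nlinarith [mul_pos e1 h1, mul_nonneg e2.le h2]

lemma pZ_ratio (β : ℝ) : ∀ (N : ℕ) (dd : ℕ → ℕ) (K : ℕ → ℝ),
    (∀ n, 1 ≤ n → 1 ≤ dd n) → (∀ n, 1 ≤ n → 0 < β * K n) →
    (pZ β N dd K true - pZ β N dd K false) / (pZ β N dd K true + pZ β N dd K false)
      = mg N dd (fun n => Real.tanh (β * K n)) := by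
  intro N
  induction N with
  | zero => intro dd K _ _; norm_num [pZ, mg]
  | succ N ih =>
    intro dd K hd hK
    have hHyp : Hyp dd (fun n => Real.tanh (β * K n)) := by
      intro n hn
      exact ⟨hd n hn, tanh_pos (hK n hn), tanh_lt_one _⟩
    obtain ⟨hZp, hZm⟩ := pZ_pos β N (fun n => dd (n+1)) (fun n => K (n+1))
    set Zt := pZ β N (fun n => dd (n+1)) (fun n => K (n+1)) true with hZt
    set Zf := pZ β N (fun n => dd (n+1)) (fun n => K (n+1)) false with hZf
    have hD : 0 < Zt + Zf := by linarith
    have hm := ih (fun n => dd (n+1)) (fun n => K (n+1))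
      (fun n hn => hd (n+1) (by omega)) (fun n hn => hK (n+1) (by omega))
    set θ := Real.tanh (β * K 1) with hθ
    have hθ0 : 0 < θ := tanh_pos (hK 1 (le_refl 1))
    have hθ1 : θ < 1 := tanh_lt_one _
    set m := mg N (fun n => dd (n+1)) (fun n => Real.tanh (β * K (n+1))) with hmdef
    obtain ⟨hm0, hm1⟩ := mg_mem hHyp.shift N
    have hE : Zt - Zf = m * (Zt + Zf) := by
      have : (Zt - Zf) / (Zt + Zf) = m := hm
      field_simp at this
      linarith [this]
    have hy0 : 0 ≤ θ * m := by positivity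
    have hy1 : θ * m < 1 := by nlinarith
    set K1 := β * K 1 with hK1
    have hsc : Real.sinh K1 = θ * Real.cosh K1 := by
      rw [hθ, Real.tanh_eq_sinh_div_cosh]
      field_simp
    have hC : 0 < Real.cosh K1 * (Zt + Zf) := by
      have := Real.cosh_pos K1
      positivity
    have etrue : pZ β (N+1) dd K true
        = (Real.exp K1 * Zt + Real.exp (-K1) * Zf) ^ (dd 1) := by
      show (∑ s' : Bool, Real.exp (β * K 1 * sgnb true * sgnb s')
        * pZ β N (fun n => dd (n+1)) (fun n => K (n+1)) s') ^ (dd 1) = _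
      rw [Fintype.sum_bool]
      norm_num [sgnb]
      rfl
    have efalse : pZ β (N+1) dd K false
        = (Real.exp (-K1) * Zt + Real.exp K1 * Zf) ^ (dd 1) := by
      show (∑ s' : Bool, Real.exp (β * K 1 * sgnb false * sgnb s')
        * pZ β N (fun n => dd (n+1)) (fun n => K (n+1)) s') ^ (dd 1) = _
      rw [Fintype.sum_bool]
      norm_num [sgnb]
      rfl
    have hA : Real.exp K1 * Zt + Real.exp (-K1) * Zf
        = (Real.cosh K1 * (Zt + Zf)) * (1 + θ * m) := by
      rw [← Real.cosh_add_sinh, ← Real.cosh_sub_sinh]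
      linear_combination Real.sinh K1 * hE + m * (Zt + Zf) * hsc
    have hB : Real.exp (-K1) * Zt + Real.exp K1 * Zf
        = (Real.cosh K1 * (Zt + Zf)) * (1 - θ * m) := by
      rw [← Real.cosh_sub_sinh, ← Real.cosh_add_sinh]
      linear_combination (-Real.sinh K1) * hE - m * (Zt + Zf) * hsc
    have hmg : mg (N+1) dd (fun n => Real.tanh (β * K n))
        = Real.tanh ((dd 1) * ath (θ * m)) := rfl
    rw [hmg, tanh_nat_ath (dd 1) hy0 hy1, etrue, efalse, hA, hB,
      mul_pow (Real.cosh K1 * (Zt + Zf)) (1 + θ * m) (dd 1),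
      mul_pow (Real.cosh K1 * (Zt + Zf)) (1 - θ * m) (dd 1),
      ← mul_sub, ← mul_add, mul_div_mul_left _ _ (ne_of_gt (pow_pos hC (dd 1)))]

lemma plusProb_formula (c : Vtx → ℕ) (J : Vtx → ℝ) (β : ℝ) (dd : ℕ → ℕ) (K : ℕ → ℝ)
    (hc : ∀ v, IsVtx c v → c v = dd (v.length + 1))
    (hJ : ∀ v, IsVtx c v → v ≠ [] → J v = K v.length)
    (hd : ∀ n, 1 ≤ n → 1 ≤ dd n) (hK : ∀ n, 1 ≤ n → 0 < β * K n) (N : ℕ) :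
    plusProb c J β N = (1 + mg N dd (fun n => Real.tanh (β * K n))) / 2 := by
  rw [plusProb_eq, Zp_eq_pZ β N c J dd K hc hJ true, Zp_eq_pZ β N c J dd K hc hJ false]
  obtain ⟨h1, h2⟩ := pZ_pos β N dd K
  have hD : 0 < pZ β N dd K true + pZ β N dd K false := by linarith
  rw [← pZ_ratio β N dd K hd hK]
  field_simp
  ring

end IsingSS

open IsingSS in
set_option maxHeartbeats 4000000 in
theorem stmt3 (c : Vtx → ℕ) (d : ℕ → ℕ) (hd : ∀ n, 1 ≤ d n)
    (hc : ∀ v, IsVtx c v → c v = d (v.length + 1))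
    (J : Vtx → ℝ) (Jl : ℕ → ℝ)
    (hJl : ∀ v, IsVtx c v → v ≠ [] → J v = Jl v.length)
    (β Jmin Jmax : ℝ) (hβ : 0 < β) (hJmin : 0 < Jmin)
    (hJb : ∀ n : ℕ, 1 ≤ n → Jmin ≤ Jl n ∧ Jl n ≤ Jmax) :
    (∃ L : ℝ, Filter.Tendsto (fun N : ℕ => plusProb c J β N) Filter.atTop (nhds L) ∧
        1 / 2 < L) ↔
      Summable (fun n : ℕ =>
        ∏ i ∈ Finset.Icc 1 (n + 1), (((d i : ℝ) * Real.tanh (β * Jl i)) ^ 2)⁻¹) := by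
  classical
  set th : ℕ → ℝ := fun n => Real.tanh (β * Jl n) with hth
  have hK : ∀ n, 1 ≤ n → 0 < β * Jl n := fun n hn =>
    mul_pos hβ (lt_of_lt_of_le hJmin (hJb n hn).1)
  have hHyp : Hyp d th := fun n hn => ⟨hd n, tanh_pos (hK n hn), tanh_lt_one _⟩
  have hform : ∀ N, plusProb c J β N = (1 + mg N d th) / 2 :=
    plusProb_formula c J β d Jl hc hJl (fun n _ => hd n) hK
  -- identification of the summand with Pk
  have hterm : ∀ n : ℕ, (∏ i ∈ Finset.Icc 1 (n + 1),
      (((d i : ℝ) * Real.tanh (β * Jl i)) ^ 2)⁻¹) = Pk d th (n+1) := by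
    intro n
    rw [Pk, ← Finset.Ico_add_one_right_eq_Icc, Finset.prod_Ico_eq_prod_range]
    have hn : n + 1 + 1 - 1 = n + 1 := by omega
    rw [hn]
    apply Finset.prod_congr rfl
    intro j _
    rw [add_comm 1 j]
  have hg0 : ∀ n, 0 < Pk d th (n+1) := fun n => Pk_pos hHyp (n+1)
  -- partial sum identities
  have hS1 : ∀ N, ∑ k ∈ Finset.range (N+1), Pk d th k
      = 1 + ∑ j ∈ Finset.range N, Pk d th (j+1) := by
    intro N
    rw [Finset.sum_range_succ' (fun k => Pk d th k) N]
    have h0 : Pk d th 0 = 1 := by simp [Pk]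
    rw [h0, add_comm]
  constructor
  · -- multiple Gibbs states → summable
    rintro ⟨L, hL, hL2⟩
    by_contra hns
    have hns' : ¬ Summable (fun n => Pk d th (n+1)) := by
      intro h
      exact hns (h.congr (fun n => (hterm n).symm))
    have hdiv : Filter.Tendsto (fun N => ∑ i ∈ Finset.range N, Pk d th (i+1))
        Filter.atTop Filter.atTop := by
      by_contra hnt
      exact hns' ((summable_iff_not_tendsto_nat_atTop_of_nonneg
        (fun n => (hg0 n).le)).mpr hnt)
    -- θmax and the key lower bound
    set θmax := Real.tanh (β * Jmax) with hθm
    have hθmax1 : θmax < 1 := tanh_lt_one _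
    have hθmax0 : 0 < θmax := by
      apply tanh_pos
      have h1 := hJb 1 (le_refl 1)
      have : 0 < Jmax := by linarith
      positivity
    have hthmax : ∀ n, 1 ≤ n → th n ≤ θmax := by
      intro n hn
      exact tanh_mono (mul_le_mul_of_nonneg_left (hJb n hn).2 hβ.le)
    set cst := (5/12 : ℝ) * (1 - θmax^2) with hcst
    have hcstpos : 0 < cst := by nlinarith
    have hkey : ∀ N, cst * (1 + ∑ j ∈ Finset.range N, Pk d th (j+1))
        ≤ 1 / (mg N d th)^2 := by
      intro N
      have hlow := mg_lower hHyp N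
      have hptwise : ∀ k, Pk d th k ≤ (if 2 ≤ d (k+1) then Pk d th k else 0)
          + θmax^2 * Pk d th (k+1) := by
        intro k
        by_cases h2 : 2 ≤ d (k+1)
        · rw [if_pos h2]
          nlinarith [hg0 k, Pk_pos hHyp k]
        · rw [if_neg h2, zero_add]
          have hd1 : d (k+1) = 1 := by have := hd (k+1); omega
          have hPk1 : Pk d th (k+1) = Pk d th k * (((d (k+1) : ℝ) * th (k+1))^2)⁻¹ := by
            rw [Pk, Pk, Finset.prod_range_succ]
          obtain ⟨-, hth0, hth1⟩ := hHyp (k+1) (by omega)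
          have hle := hthmax (k+1) (by omega)
          have hPkpos := Pk_pos hHyp k
          rw [hPk1, hd1]
          have hcast : ((1:ℕ) : ℝ) * th (k+1) = th (k+1) := by norm_num
          rw [hcast]
          have e : θmax^2 * (Pk d th k * ((th (k+1))^2)⁻¹)
              = Pk d th k * (θmax^2 / (th (k+1))^2) := by
            field_simp
          rw [e]
          nth_rewrite 1 [← mul_one (Pk d th k)]
          apply mul_le_mul_of_nonneg_left _ hPkpos.le
          rw [le_div_iff₀ (by positivity)]
          nlinarith
      have hsum2 : ∑ k ∈ Finset.range N, Pk d th k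
          ≤ (∑ k ∈ Finset.range N, (if 2 ≤ d (k+1) then Pk d th k else 0))
            + θmax^2 * ∑ k ∈ Finset.range N, Pk d th (k+1) := by
        rw [Finset.mul_sum, ← Finset.sum_add_distrib]
        exact Finset.sum_le_sum (fun k _ => hptwise k)
      have hSsplit : ∑ k ∈ Finset.range (N+1), Pk d th k
          = ∑ k ∈ Finset.range N, Pk d th k + Pk d th N := Finset.sum_range_succ _ N
      have hSsplit' := hS1 N
      have hindnn : 0 ≤ ∑ k ∈ Finset.range N, (if 2 ≤ d (k+1) then Pk d th k else 0) := by
        apply Finset.sum_nonneg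
        intro k _
        by_cases h2 : 2 ≤ d (k+1)
        · rw [if_pos h2]; exact (Pk_pos hHyp k).le
        · rw [if_neg h2]
      have hPkN : 0 < Pk d th N := Pk_pos hHyp N
      set SN := ∑ k ∈ Finset.range (N+1), Pk d th k with hSN
      set IND := ∑ k ∈ Finset.range N, (if 2 ≤ d (k+1) then Pk d th k else 0) with hIND
      have hfrac : (1 - θmax^2) * SN ≤ IND + Pk d th N := by
        have h1 : ∑ k ∈ Finset.range N, Pk d th (k+1) ≤ SN := by
          rw [hSN, hS1 N]; linarith
        have h2 : SN - Pk d th N ≤ IND + θmax^2 * SN := by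
          have := hsum2
          nlinarith [mul_le_mul_of_nonneg_left h1 (sq_nonneg θmax)]
        nlinarith
      have hlow2 : (5/12:ℝ) * (IND + Pk d th N) ≤ 1 / (mg N d th)^2 := by
        have : (5/12:ℝ) * (IND + Pk d th N) ≤ Pk d th N + (5/12) * IND := by nlinarith
        linarith [hlow]
      calc cst * (1 + ∑ j ∈ Finset.range N, Pk d th (j+1))
          = (5/12:ℝ) * ((1 - θmax^2) * SN) := by rw [hSN, hS1 N]; ring
        _ ≤ (5/12:ℝ) * (IND + Pk d th N) := by nlinarith [hfrac]
        _ ≤ 1 / (mg N d th)^2 := hlow2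
    -- mg → 0
    have hXdiv : Filter.Tendsto (fun N => cst * (1 + ∑ j ∈ Finset.range N, Pk d th (j+1)))
        Filter.atTop Filter.atTop := by
      apply Filter.Tendsto.const_mul_atTop hcstpos
      exact Filter.tendsto_atTop_add_const_left _ 1 hdiv
    have hinv0 : Filter.Tendsto
        (fun N => (cst * (1 + ∑ j ∈ Finset.range N, Pk d th (j+1)))⁻¹)
        Filter.atTop (nhds 0) := hXdiv.inv_tendsto_atTop
    have hmgbound : ∀ N, mg N d th ≤ Real.sqrt
        ((cst * (1 + ∑ j ∈ Finset.range N, Pk d th (j+1)))⁻¹) := by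
      intro N
      obtain ⟨hm0, hm1⟩ := mg_mem hHyp N
      have hX0 : 0 < cst * (1 + ∑ j ∈ Finset.range N, Pk d th (j+1)) := by
        have : (0:ℝ) ≤ ∑ j ∈ Finset.range N, Pk d th (j+1) :=
          Finset.sum_nonneg (fun j _ => (hg0 j).le)
        nlinarith
      have hsq : (mg N d th)^2 ≤ (cst * (1 + ∑ j ∈ Finset.range N, Pk d th (j+1)))⁻¹ := by
        have hk := hkey N
        have hmm : 0 < (mg N d th)^2 := by positivity
        have h2 := mul_le_mul_of_nonneg_right hk hmm.le
        have h3 : (1/(mg N d th)^2) * (mg N d th)^2 = 1 := by field_simp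
        rw [inv_eq_one_div, le_div_iff₀ hX0]
        nlinarith
      calc mg N d th = Real.sqrt ((mg N d th)^2) := (Real.sqrt_sq hm0.le).symm
        _ ≤ _ := Real.sqrt_le_sqrt hsq
    have hmg0 : Filter.Tendsto (fun N => mg N d th) Filter.atTop (nhds 0) := by
      apply squeeze_zero (fun N => (mg_mem hHyp N).1.le) hmgbound
      have : Filter.Tendsto (fun N : ℕ => Real.sqrt
          ((cst * (1 + ∑ j ∈ Finset.range N, Pk d th (j+1)))⁻¹))
          Filter.atTop (nhds (Real.sqrt 0)) :=
        (Real.continuous_sqrt.tendsto 0).comp hinv0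
      rwa [Real.sqrt_zero] at this
    have hplim : Filter.Tendsto (fun N => plusProb c J β N) Filter.atTop (nhds (1/2)) := by
      have h2 : Filter.Tendsto (fun N => (1 + mg N d th) / 2) Filter.atTop (nhds ((1+0)/2)) :=
        (Filter.Tendsto.const_add 1 hmg0).div_const 2
      have h3 : ((1:ℝ)+0)/2 = 1/2 := by norm_num
      rw [h3] at h2
      exact Filter.Tendsto.congr (fun N => (hform N).symm) h2
    have : L = 1/2 := tendsto_nhds_unique hL hplim
    rw [this] at hL2
    exact lt_irrefl _ hL2
  · -- summable → multiple Gibbs states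
    intro hsum
    have hg : Summable (fun n => Pk d th (n+1)) := hsum.congr hterm
    set T := ∑' n, Pk d th (n+1) with hT
    have hTnn : 0 ≤ T := tsum_nonneg (fun n => (hg0 n).le)
    have hub : ∀ N, 1 / (mg N d th)^2 ≤ 1 + T := by
      intro N
      have h1 := mg_upper hHyp N
      have h2 : ∑ j ∈ Finset.range N, Pk d th (j+1) ≤ T :=
        Summable.sum_le_tsum _ (fun j _ => (hg0 j).le) hg
      rw [hS1 N] at h1
      linarith
    set ε := Real.sqrt (1/(1+T)) with hε
    have hεpos : 0 < ε := Real.sqrt_pos.mpr (by positivity)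
    have hmglb : ∀ N, ε ≤ mg N d th := by
      intro N
      obtain ⟨hm0, hm1⟩ := mg_mem hHyp N
      have hsq : 1/(1+T) ≤ (mg N d th)^2 := by
        have := hub N
        rw [div_le_iff₀ (by positivity)] at this ⊢
        nlinarith
      calc ε ≤ Real.sqrt ((mg N d th)^2) := Real.sqrt_le_sqrt hsq
        _ = mg N d th := Real.sqrt_sq hm0.le
    have hanti : Antitone (fun N => plusProb c J β N) := by
      apply antitone_nat_of_succ_le
      intro N
      rw [hform, hform]
      have := mg_anti hHyp N
      linarith
    have hbdd : BddBelow (Set.range (fun N => plusProb c J β N)) := by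
      refine ⟨(1 + ε)/2, ?_⟩
      rintro x ⟨N, rfl⟩
      show (1 + ε)/2 ≤ plusProb c J β N
      rw [hform]
      have := hmglb N
      linarith
    refine ⟨⨅ N, plusProb c J β N, tendsto_atTop_ciInf hanti hbdd, ?_⟩
    have hge : (1 + ε)/2 ≤ ⨅ N, plusProb c J β N := by
      apply le_ciInf
      intro N
      show (1 + ε)/2 ≤ plusProb c J β N
      rw [hform]
      have := hmglb N
      linarith
    linarith
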